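/- For 0 \le i \le j \le d one has E^*_i F_j = E^*_i F_i \mathcal{L}^{j-i} / ((\theta^*_i-\theta^*_j)(\theta^*_i-\theta^*_{j-1})\cdots(\theta^*_i-\theta^*_{i+1})). -/

import Mathlib

/-- STATEMENT 3: For `0 ≤ i ≤ j ≤ d`,
`E*_i F_j = E*_i F_i 𝓛^{j-i} / ((θ*_i-θ*_j)(θ*_i-θ*_{j-1})⋯(θ*_i-θ*_{i+1}))`. -/
theorem stmt4 {F V : Type*} [Field F] [AddCommGroup V] [Module F V]
    [FiniteDimensional F V] (d : ℕ) (hd : 1 ≤ d)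
    (As : Module.End F V) (Es Fi : ℕ → Module.End F V) (θs : ℕ → F)
    (hEsEs : ∀ i ≤ d, ∀ j ≤ d, Es i * Es j = if i = j then Es i else 0)
    (hEssum : ∑ i ∈ Finset.range (d + 1), Es i = 1)
    (hAs : As = ∑ i ∈ Finset.range (d + 1), θs i • Es i)
    (hdist : ∀ i ≤ d, ∀ j ≤ d, i ≠ j → θs i ≠ θs j)
    (hFF : ∀ i ≤ d, ∀ j ≤ d, Fi i * Fi j = if i = j then Fi i else 0)
    (hFsum : ∑ i ∈ Finset.range (d + 1), Fi i = 1)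
    (L : Module.End F V)
    (hL : L = As - ∑ i ∈ Finset.range (d + 1), θs i • Fi i)
    (hFL : ∀ i, 1 ≤ i → i ≤ d → Fi (i - 1) * L = L * Fi i)
    (hL0 : L * Fi 0 = 0) :
    ∀ i j, i ≤ j → j ≤ d →
      Es i * Fi j =
        (∏ k ∈ Finset.Ioc i j, (θs i - θs k))⁻¹ • (Es i * Fi i * L ^ (j - i)) := by
  have hEA : ∀ i ≤ d, Es i * As = θs i • Es i := by
    intro i hi
    rw [hAs, Finset.mul_sum, Finset.sum_eq_single i]
    · rw [mul_smul_comm, hEsEs i hi i hi, if_pos rfl]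
    · intro k hk hki
      rw [mul_smul_comm, hEsEs i hi k (Finset.mem_range_succ_iff.mp hk),
        if_neg (Ne.symm hki), smul_zero]
    · intro h; exact absurd (Finset.mem_range_succ_iff.mpr hi) h
  have hELF : ∀ i ≤ d, ∀ j ≤ d, Es i * L * Fi j = (θs i - θs j) • (Es i * Fi j) := by
    intro i hi j hj
    have hsum : (∑ k ∈ Finset.range (d+1), θs k • Fi k) * Fi j = θs j • Fi j := by
      rw [Finset.sum_mul, Finset.sum_eq_single j]
      · rw [smul_mul_assoc, hFF j hj j hj, if_pos rfl]
      · intro k hk hkj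
        rw [smul_mul_assoc, hFF k (Finset.mem_range_succ_iff.mp hk) j hj,
          if_neg hkj, smul_zero]
      · intro h; exact absurd (Finset.mem_range_succ_iff.mpr hj) h
    rw [hL, mul_sub, sub_mul, hEA i hi, mul_assoc, hsum, sub_smul,
      smul_mul_assoc, mul_smul_comm]
  intro i j hij hjd
  induction j, hij using Nat.le_induction with
  | base => simp
  | succ j hij ih =>
    have hjd' : j ≤ d := Nat.le_of_succ_le hjd
    have hid : i ≤ d := le_trans hij hjd'
    have hFLj : Fi j * L = L * Fi (j + 1) := by
      simpa using hFL (j+1) (Nat.succ_le_succ (Nat.zero_le j)) hjd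
    have key : (θs i - θs (j+1)) • (Es i * Fi (j+1)) = Es i * Fi j * L := by
      rw [← hELF i hid (j+1) hjd, mul_assoc, ← hFLj, ← mul_assoc]
    have hne : θs i - θs (j+1) ≠ 0 :=
      sub_ne_zero.mpr (hdist i hid (j+1) hjd (by omega))
    have heq : Es i * Fi (j+1) = (θs i - θs (j+1))⁻¹ • (Es i * Fi j * L) := by
      rw [← key, smul_smul, inv_mul_cancel₀ hne, one_smul]
    rw [heq, ih hjd', Finset.prod_Ioc_succ_top hij, smul_mul_assoc, smul_smul,
      mul_assoc, ← pow_succ, mul_inv, mul_comm ((θs i - θs (j+1))⁻¹)]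
    have : j + 1 - i = (j - i) + 1 := by omega
    rw [this]
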